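/- Let Cℓ(V,g) = Cℓ₀ ⊕ Cℓ₁ be a Z₂-grading preserving the multivector structure, and set Vᵢ = V ∩ Cℓᵢ. Then V = V₀ ⊕ V₁ and the subspaces V₀ and V₁ are orthogonal with respect to g: g(x,y) = 0 for all x ∈ V₀, y ∈ V₁. -/

import Mathlib

open CliffordAlgebra

theorem one_mem_A0_aux {V : Type*} [AddCommGroup V] [Module ℝ V]
    (Q : QuadraticForm ℝ V)
    (A0 A1 : Submodule ℝ (CliffordAlgebra Q))
    (hsup : A0 ⊔ A1 = ⊤) (hdisj : A0 ⊓ A1 = ⊥)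
    (h00 : ∀ a ∈ A0, ∀ b ∈ A0, a * b ∈ A0)
    (h01 : ∀ a ∈ A0, ∀ b ∈ A1, a * b ∈ A1)
    (h11 : ∀ a ∈ A1, ∀ b ∈ A1, a * b ∈ A0) :
    (1 : CliffordAlgebra Q) ∈ A0 := by
  have h1 : (1 : CliffordAlgebra Q) ∈ A0 ⊔ A1 := by rw [hsup]; trivial
  obtain ⟨a0, ha0, a1, ha1, hsum⟩ := Submodule.mem_sup.mp h1
  have e1 : a0 * a1 = a0 - a0 * a0 :=
    eq_sub_of_add_eq' (by rw [← mul_add, hsum, mul_one])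
  have hz1 : a0 * a1 = 0 := by
    have : a0 * a1 ∈ A0 ⊓ A1 :=
      ⟨e1 ▸ sub_mem ha0 (h00 a0 ha0 a0 ha0), h01 a0 ha0 a1 ha1⟩
    rwa [hdisj, Submodule.mem_bot] at this
  have e2 : a1 = a1 * a1 := by
    have h : a0 * a1 + a1 * a1 = a1 := by rw [← add_mul, hsum, one_mul]
    rw [hz1, zero_add] at h; exact h.symm
  have hz2 : a1 = 0 := by
    have : a1 ∈ A0 ⊓ A1 := ⟨e2 ▸ h11 a1 ha1 a1 ha1, ha1⟩
    rwa [hdisj, Submodule.mem_bot] at this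
  rw [hz2, add_zero] at hsum
  rwa [← hsum]

/-- For a Z₂-grading of `Cℓ(V,g)` preserving the multivector structure, with
`Vᵢ = V ∩ Cℓᵢ`, one has `V = V₀ ⊕ V₁` and `V₀ ⊥ V₁` with respect to `g`. -/
theorem vector_space_decomposition_of_multivector_preserving_grading
    {V : Type*} [AddCommGroup V] [Module ℝ V] [FiniteDimensional ℝ V]
    (B : LinearMap.BilinForm ℝ V) (hsymm : B.IsSymm) (hnd : B.Nondegenerate)
    (A0 A1 : Submodule ℝ (CliffordAlgebra B.toQuadraticMap))
    (hsup : A0 ⊔ A1 = ⊤) (hdisj : A0 ⊓ A1 = ⊥)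
    (h00 : ∀ a ∈ A0, ∀ b ∈ A0, a * b ∈ A0)
    (h01 : ∀ a ∈ A0, ∀ b ∈ A1, a * b ∈ A1)
    (h10 : ∀ a ∈ A1, ∀ b ∈ A0, a * b ∈ A1)
    (h11 : ∀ a ∈ A1, ∀ b ∈ A1, a * b ∈ A0)
    -- the grading preserves the multivector structure: the projections of a
    -- 1-vector are again 1-vectors
    (hpres : ∀ v : V, ∃ v0 v1 : V, ι B.toQuadraticMap v0 ∈ A0 ∧
      ι B.toQuadraticMap v1 ∈ A1 ∧ v = v0 + v1) :
    (A0.comap (ι B.toQuadraticMap)) ⊔ (A1.comap (ι B.toQuadraticMap)) = ⊤ ∧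
    (A0.comap (ι B.toQuadraticMap)) ⊓ (A1.comap (ι B.toQuadraticMap)) = ⊥ ∧
    (∀ x y : V, ι B.toQuadraticMap x ∈ A0 → ι B.toQuadraticMap y ∈ A1 → B x y = 0) := by
  have halg : Function.Injective (algebraMap ℝ (CliffordAlgebra B.toQuadraticMap)) :=
    RingHom.injective _
  have hone : (1 : CliffordAlgebra B.toQuadraticMap) ∈ A0 :=
    one_mem_A0_aux B.toQuadraticMap A0 A1 hsup hdisj h00 h01 h11
  have hpolar : ∀ x y : V, QuadraticMap.polar B.toQuadraticMap x y = B x y + B y x :=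
    fun x y => LinearMap.BilinMap.polar_toQuadraticMap (B := B) x y
  refine ⟨?_, ?_, ?_⟩
  · rw [eq_top_iff]
    intro v _
    obtain ⟨v0, v1, h0, h1, hv⟩ := hpres v
    exact hv ▸ Submodule.add_mem_sup h0 h1
  · rw [eq_bot_iff]
    intro v hv
    obtain ⟨hv0, hv1⟩ := hv
    have hz : ι B.toQuadraticMap v = 0 := by
      have : ι B.toQuadraticMap v ∈ A0 ⊓ A1 := ⟨hv0, hv1⟩
      rwa [hdisj, Submodule.mem_bot] at this
    have hB : ∀ w : V, B v w = 0 := by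
      intro w
      have hp : ι B.toQuadraticMap v * ι B.toQuadraticMap w +
          ι B.toQuadraticMap w * ι B.toQuadraticMap v =
          algebraMap ℝ _ (QuadraticMap.polar B.toQuadraticMap v w) := ι_mul_ι_add_swap v w
      rw [hz, zero_mul, mul_zero, add_zero] at hp
      have h0 : QuadraticMap.polar B.toQuadraticMap v w = 0 :=
        halg (by rw [← hp, map_zero])
      rw [hpolar] at h0
      have hs := hsymm.eq v w
      -- hs : B v w = B w v (as flip)
      linarith [h0, hs]
    exact Submodule.mem_bot ℝ |>.mpr (hnd.1 v hB)
  · intro x y hx hy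
    have hp : ι B.toQuadraticMap x * ι B.toQuadraticMap y +
        ι B.toQuadraticMap y * ι B.toQuadraticMap x =
        algebraMap ℝ _ (QuadraticMap.polar B.toQuadraticMap x y) := ι_mul_ι_add_swap x y
    have hmem : algebraMap ℝ (CliffordAlgebra B.toQuadraticMap)
        (QuadraticMap.polar B.toQuadraticMap x y) ∈ A0 ⊓ A1 := by
      constructor
      · rw [Algebra.algebraMap_eq_smul_one]
        exact Submodule.smul_mem _ _ hone
      · rw [← hp]
        exact add_mem (h01 _ hx _ hy) (h10 _ hy _ hx)
    rw [hdisj, Submodule.mem_bot] at hmem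
    have h0 : QuadraticMap.polar B.toQuadraticMap x y = 0 := halg (by rw [hmem, map_zero])
    rw [hpolar] at h0
    have hs := hsymm.eq x y
    linarith [h0, hs]
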